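/- Let p ≥ 5 be a prime. The dimension over F_p of the permutation module F_p[P¹(F_p)] equals p + 1, and it decomposes as the direct sum of a 1-dimensional trivial representation and an irreducible p-dimensional representation of SL₂(F_p). -/

import Mathlib

open Matrix Projectivization

theorem mapCongr {K V : Type} [Field K] [AddCommGroup V] [Module K V]
    {f g : V →ₗ[K] V} (hf : Function.Injective f) (hg : Function.Injective g)
    (h : f = g) (x : Projectivization K V) :
    Projectivization.map f hf x = Projectivization.map g hg x := by subst h; rfl

/-- The Möbius action of `SL₂(K)` on the projective line `P¹(K)`. -/
noncomputable instance sl2P1Action (K : Type) [Field K] :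
    MulAction (Matrix.SpecialLinearGroup (Fin 2) K) (Projectivization K (Fin 2 → K)) where
  smul g x := Projectivization.map (Matrix.SpecialLinearGroup.toLin' g).toLinearMap
    (Matrix.SpecialLinearGroup.toLin' g).injective x
  one_smul x := by
    show Projectivization.map _ _ x = x
    rw [mapCongr _ (LinearEquiv.refl K (Fin 2 → K)).injective (by ext v; simp) x]
    exact congrFun Projectivization.map_id x
  mul_smul a b x := by
    show Projectivization.map _ _ x = Projectivization.map _ _ (Projectivization.map _ _ x)
    rw [← Function.comp_apply (f := Projectivization.map _ _), ← Projectivization.map_comp]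
    exact mapCongr _ _ (by ext v; simp [_root_.map_mul]) x

instance P1Finite (K V : Type) [Field K] [AddCommGroup V] [Module K V] [Finite V] :
    Finite (Projectivization K V) := by
  unfold Projectivization; infer_instance

section Aux

variable {K : Type} [Field K]

theorem smul_mk (g : Matrix.SpecialLinearGroup (Fin 2) K) (v : Fin 2 → K) (hv : v ≠ 0) :
    g • Projectivization.mk K v hv =
      Projectivization.mk K (g.1 *ᵥ v)
        (by simpa [Matrix.SpecialLinearGroup.toLin'_apply, Matrix.toLin'_apply] using
          (Matrix.SpecialLinearGroup.toLin' g).map_ne_zero_iff.mpr hv) := by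
  show Projectivization.map _ _ _ = _
  rw [Projectivization.map_mk]
  simp [Matrix.SpecialLinearGroup.toLin'_apply, Matrix.toLin'_apply]

theorem vec_ne_zero1 (a : K) : ![a, 1] ≠ 0 := by
  intro h
  have := congrFun h 1
  simp at this

theorem vec_ne_zero0 : (![1, 0] : Fin 2 → K) ≠ 0 := by
  intro h
  have := congrFun h 0
  simp at this

/-- affine point -/
def pt (a : K) : Projectivization K (Fin 2 → K) := Projectivization.mk K ![a, 1] (vec_ne_zero1 a)

/-- point at infinity -/
def inf : Projectivization K (Fin 2 → K) := Projectivization.mk K ![1, 0] vec_ne_zero0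

theorem pt_injective : Function.Injective (pt (K := K)) := by
  intro a b h
  rw [pt, pt, Projectivization.mk_eq_mk_iff] at h
  obtain ⟨c, hc⟩ := h
  have h1 := congrFun hc 1
  have h0 := congrFun hc 0
  simp [Matrix.smul_cons, Units.smul_def, smul_eq_mul] at h1 h0
  simp [h1] at h0; exact h0.symm

theorem inf_ne_pt (a : K) : inf ≠ pt a := by
  intro h
  rw [inf, pt, Projectivization.mk_eq_mk_iff] at h
  obtain ⟨c, hc⟩ := h
  have h1 := congrFun hc (1 : Fin 2)
  simp [Matrix.smul_cons, Units.smul_def, smul_eq_mul] at h1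

theorem mk_congr {v w : Fin 2 → K} (hv : v ≠ 0) (h : v = w) :
    Projectivization.mk K v hv = Projectivization.mk K w (h ▸ hv) := by subst h; rfl

theorem classify (x : Projectivization K (Fin 2 → K)) : x = inf ∨ ∃ a, x = pt a := by
  induction x using Projectivization.ind with
  | h v hv =>
    by_cases h1 : v 1 = 0
    · left
      have h0 : v 0 ≠ 0 := by
        intro h0; apply hv; funext i; fin_cases i <;> assumption
      rw [inf, Projectivization.mk_eq_mk_iff]
      exact ⟨Units.mk0 (v 0) h0, by funext i; fin_cases i <;> simp [Matrix.smul_cons, h1]⟩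
    · right
      refine ⟨v 0 / v 1, ?_⟩
      rw [pt, Projectivization.mk_eq_mk_iff]
      exact ⟨Units.mk0 (v 1) h1, by funext i; fin_cases i <;>
        simp [Matrix.smul_cons, mul_div_cancel₀ _ h1]⟩

/-- upper unipotent -/
def uT (t : K) : Matrix.SpecialLinearGroup (Fin 2) K :=
  ⟨!![1, t; 0, 1], by simp [Matrix.det_fin_two_of]⟩

theorem uT_smul_pt (t a : K) : uT t • pt a = pt (a + t) := by
  rw [pt, pt, _root_.smul_mk]
  apply mk_congr
  funext i
  fin_cases i <;> simp [uT, Matrix.mulVec, dotProduct, Fin.sum_univ_two, add_comm]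

theorem uT_smul_inf (t : K) : uT t • inf = (inf : Projectivization K (Fin 2 → K)) := by
  rw [inf, _root_.smul_mk]
  apply mk_congr
  funext i
  fin_cases i <;> simp [uT, Matrix.mulVec, dotProduct, Fin.sum_univ_two]

theorem uT_mul (t s : K) : uT t * uT s = uT (t + s) := by
  apply Subtype.ext
  show !![1, t; 0, 1] * !![1, s; 0, 1] = _
  rw [Matrix.mul_fin_two]
  simp [uT, add_comm s t]

theorem uT_zero : uT (0 : K) = 1 := by
  apply Subtype.ext
  show !![1, (0:K); 0, 1] = (1 : Matrix (Fin 2) (Fin 2) K)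
  rw [Matrix.one_fin_two]

theorem uT_pow (t : K) (n : ℕ) : uT t ^ n = uT (n * t) := by
  induction n with
  | zero =>
    rw [pow_zero, Nat.cast_zero, zero_mul, uT_zero]
  | succ n ih =>
    rw [pow_succ, ih, uT_mul]
    congr 1
    push_cast
    ring

theorem uT_inv (t : K) : (uT t)⁻¹ = uT (-t) := by
  apply inv_eq_of_mul_eq_one_right
  rw [uT_mul, add_neg_cancel, uT_zero]

theorem exists_g_smul_inf (x : Projectivization K (Fin 2 → K)) :
    ∃ g : Matrix.SpecialLinearGroup (Fin 2) K, g • inf = x := by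
  rcases classify x with h | ⟨a, h⟩
  · exact ⟨1, by rw [one_smul, h]⟩
  · refine ⟨⟨!![a, -1; 1, 0], by simp [Matrix.det_fin_two_of]⟩, ?_⟩
    rw [h, inf, pt]
    refine (_root_.smul_mk _ _ _).trans ?_
    apply mk_congr
    funext i
    fin_cases i <;> simp [Matrix.mulVec, dotProduct, Fin.sum_univ_two]

/-- the equivalence Option K ≃ P¹(K) -/
noncomputable def optEquiv : Option K ≃ Projectivization K (Fin 2 → K) :=
  Equiv.ofBijective (fun o => o.elim inf pt) (by
    constructor
    · rintro (_|a) (_|b) h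
      · rfl
      · exact absurd h (inf_ne_pt b)
      · exact absurd h.symm (inf_ne_pt a)
      · exact congrArg _ (pt_injective h)
    · intro x
      rcases classify x with h | ⟨a, h⟩
      · exact ⟨none, h.symm⟩
      · exact ⟨some a, h.symm⟩)

end Aux

/-- shorthand -/
abbrev Pone (p : ℕ) [Fact p.Prime] : Type := Projectivization (ZMod p) (Fin 2 → ZMod p)

/-- constant one function -/
abbrev oneF (p : ℕ) [Fact p.Prime] : Pone p → ZMod p := fun _ => 1

theorem bigAux (p : ℕ) [Fact p.Prime] (h5 : 5 ≤ p)
    [instF : Fintype (Pone p)]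
    (sumF : (Pone p → ZMod p) →ₗ[ZMod p] ZMod p)
    (hsumF : ∀ f, sumF f = ∑ x, f x) :
    Module.finrank (ZMod p) (Pone p → ZMod p) = p + 1 ∧
      IsCompl (Submodule.span (ZMod p)
          {oneF p})
        (LinearMap.ker sumF) ∧
      Module.finrank (ZMod p) (Submodule.span (ZMod p)
          {oneF p}) = 1 ∧
      Module.finrank (ZMod p) (LinearMap.ker sumF) = p ∧
      (∀ (g : Matrix.SpecialLinearGroup (Fin 2) (ZMod p))
          (f : Pone p → ZMod p),
        f ∈ Submodule.span (ZMod p)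
          {oneF p} →
          (fun x => f (g⁻¹ • x)) = f) ∧
      (∀ (g : Matrix.SpecialLinearGroup (Fin 2) (ZMod p))
          (f : Pone p → ZMod p),
        f ∈ LinearMap.ker sumF → (fun x => f (g⁻¹ • x)) ∈ LinearMap.ker sumF) ∧
      ∀ W : Submodule (ZMod p) (Pone p → ZMod p),
        W ≤ LinearMap.ker sumF →
        (∀ (g : Matrix.SpecialLinearGroup (Fin 2) (ZMod p))
            (f : Pone p → ZMod p),
          f ∈ W → (fun x => f (g⁻¹ • x)) ∈ W) →
        W = ⊥ ∨ W = LinearMap.ker sumF := by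
  classical
  have hp : p.Prime := Fact.out
  let e : Option (ZMod p) ≃ Pone p := optEquiv
  have hcard : Fintype.card (Pone p) = p + 1 := by
    rw [← Fintype.card_congr e, Fintype.card_option, ZMod.card]
  have hsum : ∀ f : Pone p → ZMod p, sumF f = f inf + ∑ a : ZMod p, f (pt a) := by
    intro f
    rw [hsumF, ← Equiv.sum_comp e f, Fintype.sum_option]
    rfl
  have hone : sumF (oneF p) = 1 := by
    rw [hsumF, Finset.sum_const, Finset.card_univ, hcard, nsmul_eq_mul, mul_one]
    push_cast
    simp [ZMod.natCast_self]
  have honene : oneF p ≠ 0 := by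
    intro h
    have := congrFun h inf
    simp at this
  have hmemT : ∀ f, f ∈ Submodule.span (ZMod p) {oneF p} ↔ ∃ c : ZMod p, c • oneF p = f := by
    intro f; exact Submodule.mem_span_singleton
  have hsumF_T : ∀ f ∈ Submodule.span (ZMod p) {oneF p}, sumF f = 0 → f = 0 := by
    intro f hf hsf
    obtain ⟨c, rfl⟩ := (hmemT f).mp hf
    rw [LinearMap.map_smul, hone, smul_eq_mul, mul_one] at hsf
    rw [hsf, zero_smul]
  have hsurj : Function.Surjective sumF := by
    intro c
    exact ⟨c • oneF p, by rw [LinearMap.map_smul, hone, smul_eq_mul, mul_one]⟩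
  have hZmem : ∀ f, f ∈ LinearMap.ker sumF ↔ sumF f = 0 := fun f => LinearMap.mem_ker
  refine ⟨?_, ?_, ?_, ?_, ?_, ?_, ?_⟩
  · rw [Module.finrank_fintype_fun_eq_card, hcard]
  · constructor
    · rw [Submodule.disjoint_def]
      intro f hfT hfZ
      exact hsumF_T f hfT ((hZmem f).mp hfZ)
    · rw [codisjoint_iff, eq_top_iff]
      intro f _
      rw [Submodule.mem_sup]
      refine ⟨sumF f • oneF p, ?_, f - sumF f • oneF p, ?_, by abel⟩
      · exact Submodule.smul_mem _ _ (Submodule.subset_span rfl)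
      · rw [hZmem, map_sub, LinearMap.map_smul, hone, smul_eq_mul, mul_one, sub_self]
  · exact finrank_span_singleton honene
  · have h := LinearMap.finrank_range_add_finrank_ker sumF
    rw [LinearMap.range_eq_top.mpr hsurj, finrank_top, Module.finrank_self,
      Module.finrank_fintype_fun_eq_card, hcard] at h
    omega
  · intro g f hf
    obtain ⟨c, rfl⟩ := (hmemT f).mp hf
    rfl
  · intro g f hf
    rw [hZmem, hsumF]
    rw [hZmem, hsumF, ← Equiv.sum_comp (MulAction.toPerm (g⁻¹ : Matrix.SpecialLinearGroup (Fin 2) (ZMod p)) : Equiv.Perm (Pone p)) f] at hf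
    exact hf
  · intro W hWZ hWinv
    by_cases hWbot : W = ⊥
    · exact Or.inl hWbot
    right
    obtain ⟨f0, hf0W, hf0ne⟩ := (Submodule.ne_bot_iff W).mp hWbot
    haveI : Nontrivial W := Submodule.nontrivial_iff_ne_bot.mpr hWbot
    -- the endomorphism of W induced by the unipotent uT 1
    let σ : W →ₗ[ZMod p] W :=
      { toFun := fun w => ⟨fun x => w.1 ((uT 1)⁻¹ • x), hWinv (uT 1) w.1 w.2⟩
        map_add' := fun a b => rfl
        map_smul' := fun c a => rfl }
    have hσ_pow : ∀ (n : ℕ) (w : W) (x : Pone p),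
        ((σ ^ n) w).1 x = w.1 ((uT (1 : ZMod p))⁻¹ ^ n • x) := by
      intro n
      induction n with
      | zero => intro w x; rw [pow_zero, pow_zero, one_smul]; rfl
      | succ n ih =>
        intro w x
        rw [pow_succ, Module.End.mul_apply, ih (σ w) x]
        show w.1 ((uT 1)⁻¹ • ((uT (1 : ZMod p))⁻¹ ^ n • x)) = _
        rw [smul_smul, ← pow_succ']
    have hu_inv_pow : ((uT (1 : ZMod p))⁻¹) ^ p = 1 := by
      rw [inv_pow, uT_pow, mul_one, ZMod.natCast_self, uT_zero, inv_one]
    have hσp : σ ^ p = 1 := by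
      apply LinearMap.ext; intro w
      apply Subtype.ext
      funext x
      rw [hσ_pow p w x, hu_inv_pow, one_smul]
      rfl
    haveI : CharP (Module.End (ZMod p) W) p :=
      charP_of_injective_ringHom (algebraMap (ZMod p) (Module.End (ZMod p) W)).injective p
    have hnil : ((σ - 1) : Module.End (ZMod p) W) ^ p = 0 := by
      rw [sub_pow_char_of_commute p (Commute.one_right σ), hσp, one_pow, sub_self]
    obtain ⟨w, hwne, hwfix⟩ : ∃ w : W, w ≠ 0 ∧ σ w = w := by
      by_contra hcon
      push_neg at hcon
      have hinj : Function.Injective ((σ - 1) : Module.End (ZMod p) W) := by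
        rw [← LinearMap.ker_eq_bot, LinearMap.ker_eq_bot']
        intro m hm
        by_contra hm0
        apply hcon m hm0
        have hsub : σ m - m = 0 := hm
        exact sub_eq_zero.mp hsub
      have hinjp : Function.Injective (((σ - 1) : Module.End (ZMod p) W) ^ p) := by
        have hit := Function.Injective.iterate hinj p
        intro a b hab
        apply hit
        rwa [← Module.End.pow_apply, ← Module.End.pow_apply]
      obtain ⟨a, b, hab⟩ := exists_pair_ne W
      apply hab
      apply hinjp
      rw [hnil]
      simp
    have hfix : ∀ x : Pone p, w.1 ((uT (1 : ZMod p))⁻¹ • x) = w.1 x := by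
      intro x
      exact congrFun (congrArg Subtype.val hwfix) x
    have hstep : ∀ a : ZMod p, w.1 (pt (a + -1)) = w.1 (pt a) := by
      intro a
      have := hfix (pt a)
      rwa [uT_inv, uT_smul_pt] at this
    have hconst : ∀ a : ZMod p, w.1 (pt a) = w.1 (pt 0) := by
      have hnat : ∀ n : ℕ, w.1 (pt ((n : ℕ) : ZMod p)) = w.1 (pt 0) := by
        intro n
        induction n with
        | zero => norm_num
        | succ n ih =>
          have hs := hstep (((n : ℕ) : ZMod p) + 1)
          rw [show ((n : ℕ) : ZMod p) + 1 + -1 = ((n : ℕ) : ZMod p) by ring] at hs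
          rw [show (((n+1 : ℕ) : ℕ) : ZMod p) = ((n : ℕ) : ZMod p) + 1 by push_cast; ring]
          rw [← hs]
          exact ih
      intro a
      have := hnat a.val
      rwa [ZMod.natCast_val, ZMod.cast_id] at this
    have hinf0 : w.1 inf = 0 := by
      have h0 := (hZmem w.1).mp (hWZ w.2)
      rw [hsum] at h0
      have hz : ∑ a : ZMod p, w.1 (pt a) = 0 := by
        rw [Finset.sum_congr rfl (fun a _ => hconst a), Finset.sum_const, Finset.card_univ,
          ZMod.card, nsmul_eq_mul, ZMod.natCast_self, zero_mul]
      rw [hz, add_zero] at h0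
      exact h0
    have hc0 : w.1 (pt 0) ≠ 0 := by
      intro h
      apply hwne
      apply Subtype.ext
      funext x
      show w.1 x = 0
      rcases classify x with rfl | ⟨a, rfl⟩
      · exact hinf0
      · rw [hconst a, h]
    have hbase : ((w.1 (pt 0))⁻¹ • w.1 : Pone p → ZMod p) =
        fun x => if x = inf then 0 else 1 := by
      funext x
      rcases classify x with rfl | ⟨a, rfl⟩
      · simp [hinf0]
      · rw [if_neg (fun hh => inf_ne_pt a hh.symm)]
        show (w.1 (pt 0))⁻¹ * w.1 (pt a) = 1
        rw [hconst a]
        exact inv_mul_cancel₀ hc0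
    have hWbase : (fun x => if x = inf then (0 : ZMod p) else 1) ∈ W :=
      hbase ▸ Submodule.smul_mem W _ w.2
    have hWy : ∀ y : Pone p, (fun x => if x = y then (0 : ZMod p) else 1) ∈ W := by
      intro y
      obtain ⟨g, hg⟩ := exists_g_smul_inf y
      have hmem := hWinv g _ hWbase
      have heq : (fun x : Pone p =>
          (fun z : Pone p => if z = inf then (0 : ZMod p) else 1) (g⁻¹ • x)) =
          fun x => if x = y then (0 : ZMod p) else 1 := by
        funext x
        show (if g⁻¹ • x = inf then (0 : ZMod p) else 1) = _
        rw [inv_smul_eq_iff, hg]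
      rwa [heq] at hmem
    have hdiff : ∀ y : Pone p,
        (fun x => (if x = y then (1 : ZMod p) else 0) - (if x = inf then 1 else 0)) ∈ W := by
      intro y
      have hsm := Submodule.sub_mem W (hWy inf) (hWy y)
      have heq : ((fun x => if x = inf then (0 : ZMod p) else 1) -
          (fun x => if x = y then (0 : ZMod p) else 1)) =
          fun x => (if x = y then (1 : ZMod p) else 0) - (if x = inf then 1 else 0) := by
        funext x
        simp only [Pi.sub_apply]
        by_cases hx : x = y
        · subst hx
          by_cases hx' : x = inf <;> simp [hx']
        · by_cases hx' : x = inf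
          · subst hx'
            simp [hx]
          · simp [hx, hx']
      rwa [heq] at hsm
    apply le_antisymm hWZ
    intro f hf
    have hf0 : ∑ x : Pone p, f x = 0 := by
      rw [← hsumF]
      exact (hZmem f).mp hf
    have hrepr : f = ∑ y : Pone p, f y •
        (fun x => (if x = y then (1 : ZMod p) else 0) - (if x = inf then 1 else 0)) := by
      funext z
      rw [Finset.sum_apply]
      simp only [Pi.smul_apply, smul_eq_mul, mul_sub]
      rw [Finset.sum_sub_distrib, ← Finset.sum_mul, hf0, zero_mul, sub_zero]
      simp only [mul_ite, mul_one, mul_zero]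
      rw [Finset.sum_ite_eq Finset.univ z f]
      simp
    rw [hrepr]
    exact Submodule.sum_mem W (fun y _ => Submodule.smul_mem W _ (hdiff y))

/-- For a prime `p ≥ 5`, the permutation module `F_p[P¹(F_p)]` has dimension
`p + 1` over `F_p`, and it is the direct sum of the `1`-dimensional trivial
representation (constant functions) and an irreducible `p`-dimensional
`SL₂(F_p)`-representation (zero-sum functions). -/
theorem perm_module_P1_dimension_decomposition (p : ℕ) [Fact p.Prime] (h5 : 5 ≤ p) :
    letI P1 := Projectivization (ZMod p) (Fin 2 → ZMod p)
    letI : Fintype P1 := Fintype.ofFinite P1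
    letI T : Submodule (ZMod p) (P1 → ZMod p) :=
      Submodule.span (ZMod p) {(fun _ => (1 : ZMod p) : P1 → ZMod p)}
    letI sumF : (P1 → ZMod p) →ₗ[ZMod p] ZMod p :=
      { toFun := fun f => ∑ x, f x
        map_add' := by intro f g; simp [Finset.sum_add_distrib]
        map_smul' := by intro c f; simp [Finset.mul_sum] }
    letI Z : Submodule (ZMod p) (P1 → ZMod p) := LinearMap.ker sumF
    Module.finrank (ZMod p) (P1 → ZMod p) = p + 1 ∧
      IsCompl T Z ∧
      Module.finrank (ZMod p) T = 1 ∧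
      Module.finrank (ZMod p) Z = p ∧
      (∀ (g : Matrix.SpecialLinearGroup (Fin 2) (ZMod p)) (f : P1 → ZMod p),
        f ∈ T → (fun x => f (g⁻¹ • x)) = f) ∧
      (∀ (g : Matrix.SpecialLinearGroup (Fin 2) (ZMod p)) (f : P1 → ZMod p),
        f ∈ Z → (fun x => f (g⁻¹ • x)) ∈ Z) ∧
      ∀ W : Submodule (ZMod p) (P1 → ZMod p), W ≤ Z →
        (∀ (g : Matrix.SpecialLinearGroup (Fin 2) (ZMod p)) (f : P1 → ZMod p),
          f ∈ W → (fun x => f (g⁻¹ • x)) ∈ W) →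
        W = ⊥ ∨ W = Z := by
  letI : Fintype (Projectivization (ZMod p) (Fin 2 → ZMod p)) :=
    Fintype.ofFinite (Projectivization (ZMod p) (Fin 2 → ZMod p))
  exact bigAux p h5 _ (fun _ => rfl)
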